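/- arXiv:0905.3159 — 7 statements merged into one kernel-verified Lean document; each statement's English description precedes it below -/
import Mathlib

section
/- Let ρ₀, c₀, S₀ be positive real numbers, α₀ = c₀/(2S₀), β₀ = 4S₀/(ρ₀c₀²). Let w, p : ℝ × ℝ → ℝ be differentiable functions of (t, z) with 1 + β₀p(t,z) > 0 everywhere, satisfying the Hooke law ∂_t p + w ∂_z p + ρ₀c₀²(1 + β₀p) ∂_z w = 0. Then the strain density Q(t,z) = (1 + β₀p(t,z))^{α₀/(2c₀)} satisfies the conservation law ∂_t Q + ∂_z(Q w) = 0. -/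
/-- If `(w, p)` satisfies the Hooke law
`∂ₜ p + w ∂_z p + ρ₀ c₀² (1 + β₀ p) ∂_z w = 0`, then the strain density
`Q = (1 + β₀ p)^(α₀/(2c₀))` satisfies the conservation law
`∂ₜ Q + ∂_z (Q w) = 0`.  The variables are ordered as `(t, z)`. -/
theorem strain_density_conservation (ρ₀ c₀ S₀ : ℝ)
    (hρ₀ : 0 < ρ₀) (hc₀ : 0 < c₀) (hS₀ : 0 < S₀)
    (α₀ β₀ : ℝ) (hα₀ : α₀ = c₀ / (2 * S₀)) (hβ₀ : β₀ = 4 * S₀ / (ρ₀ * c₀ ^ 2))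
    (w p : ℝ × ℝ → ℝ) (hw : Differentiable ℝ w) (hp : Differentiable ℝ p)
    (hpos : ∀ x : ℝ × ℝ, 0 < 1 + β₀ * p x)
    (hhooke : ∀ x : ℝ × ℝ,
      fderiv ℝ p x (1, 0) + w x * fderiv ℝ p x (0, 1)
        + ρ₀ * c₀ ^ 2 * (1 + β₀ * p x) * fderiv ℝ w x (0, 1) = 0)
    (Q : ℝ × ℝ → ℝ) (hQ : Q = fun x => (1 + β₀ * p x) ^ (α₀ / (2 * c₀))) :
    ∀ x : ℝ × ℝ,
      fderiv ℝ Q x (1, 0) + fderiv ℝ (fun y => Q y * w y) x (0, 1) = 0 := by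
  intro x
  set r : ℝ := α₀ / (2 * c₀) with hr
  have hgx : 0 < 1 + β₀ * p x := hpos x
  -- derivative of g = 1 + β₀ * p
  have hg : HasFDerivAt (fun y => 1 + β₀ * p y) (β₀ • fderiv ℝ p x) x := by
    simpa using ((hp x).hasFDerivAt.const_smul β₀).const_add 1
  have hQd : HasFDerivAt Q
      ((r * (1 + β₀ * p x) ^ (r - 1)) • (β₀ • fderiv ℝ p x)) x := by
    rw [hQ]
    exact hg.rpow_const (Or.inl hgx.ne')
  have hQw : HasFDerivAt (fun y => Q y * w y)
      (Q x • fderiv ℝ w x +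
        w x • ((r * (1 + β₀ * p x) ^ (r - 1)) • (β₀ • fderiv ℝ p x))) x :=
    hQd.mul (hw x).hasFDerivAt
  rw [hQd.fderiv, hQw.fderiv]
  have key := hhooke x
  have hQx : Q x = (1 + β₀ * p x) ^ r := by rw [hQ]
  simp only [ContinuousLinearMap.add_apply, ContinuousLinearMap.smul_apply,
    smul_eq_mul, hQx]
  have hpow : (1 + β₀ * p x) ^ (r - 1) * (1 + β₀ * p x) = (1 + β₀ * p x) ^ r := by
    rw [← Real.rpow_add_one hgx.ne', sub_add_cancel]
  have hrβ : r * β₀ * (ρ₀ * c₀ ^ 2) = 1 := by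
    rw [hr, hα₀, hβ₀]
    field_simp
    ring
  linear_combination (r * β₀ * (1 + β₀ * p x) ^ (r - 1)) * key
    + (-(r * β₀ * (ρ₀ * c₀ ^ 2) * fderiv ℝ w x (0, 1))) * hpow
    + (-((1 + β₀ * p x) ^ r * fderiv ℝ w x (0, 1))) * hrβ
end

section
/- Let ρ₀, c₀, S₀, g, k be real numbers with ρ₀, c₀, S₀ > 0, α₀ = c₀/(2S₀), β₀ = 4S₀/(ρ₀c₀²), γ₀ = 2c₀/α₀ + 1, and P(q) = (c₀²/γ₀) q^{γ₀}. Let w, p : ℝ × ℝ → ℝ be differentiable functions of (t,z) with 1 + β₀p(t,z) > 0 everywhere, satisfying the dynamics equation ρ₀(∂_t w + w ∂_z w) + ∂_z p + ρ₀g + k|w|w = 0 and the Hooke law ∂_t p + w ∂_z p + ρ₀c₀²(1 + β₀p) ∂_z w = 0. Then the strain density Q(t,z) = (1 + β₀p(t,z))^{α₀/(2c₀)} and the momentum m = Q w satisfy the conservative momentum equation ∂_t m + ∂_z(m w + P(Q)) + g Q + (k/ρ₀) Q |w| w = 0. -/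
/-- If `(w, p)` satisfies the dynamics equation with gravity and friction and
the Hooke law, then the strain density `Q = (1 + β₀ p)^(α₀/(2c₀))` and momentum
`m = Q w` satisfy the conservative momentum equation
`∂ₜ m + ∂_z (m w + P(Q)) + g Q + (k/ρ₀) Q |w| w = 0`, where
`P(q) = (c₀²/γ₀) q^γ₀` and `γ₀ = 2c₀/α₀ + 1`.  Variables are ordered `(t, z)`. -/
theorem momentum_conservation (ρ₀ c₀ S₀ g k : ℝ)
    (hρ₀ : 0 < ρ₀) (hc₀ : 0 < c₀) (hS₀ : 0 < S₀)
    (α₀ β₀ γ₀ : ℝ) (hα₀ : α₀ = c₀ / (2 * S₀)) (hβ₀ : β₀ = 4 * S₀ / (ρ₀ * c₀ ^ 2))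
    (hγ₀ : γ₀ = 2 * c₀ / α₀ + 1)
    (w p : ℝ × ℝ → ℝ) (hw : Differentiable ℝ w) (hp : Differentiable ℝ p)
    (hpos : ∀ x : ℝ × ℝ, 0 < 1 + β₀ * p x)
    (hdyn : ∀ x : ℝ × ℝ,
      ρ₀ * (fderiv ℝ w x (1, 0) + w x * fderiv ℝ w x (0, 1))
        + fderiv ℝ p x (0, 1) + ρ₀ * g + k * |w x| * w x = 0)
    (hhooke : ∀ x : ℝ × ℝ,
      fderiv ℝ p x (1, 0) + w x * fderiv ℝ p x (0, 1)
        + ρ₀ * c₀ ^ 2 * (1 + β₀ * p x) * fderiv ℝ w x (0, 1) = 0)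
    (Q : ℝ × ℝ → ℝ) (hQ : Q = fun x => (1 + β₀ * p x) ^ (α₀ / (2 * c₀)))
    (m : ℝ × ℝ → ℝ) (hm : m = fun x => Q x * w x) :
    ∀ x : ℝ × ℝ,
      fderiv ℝ m x (1, 0)
        + fderiv ℝ (fun y => m y * w y + c₀ ^ 2 / γ₀ * Q y ^ γ₀) x (0, 1)
        + g * Q x + k / ρ₀ * Q x * |w x| * w x = 0 := by
  intro x
  set a : ℝ := α₀ / (2 * c₀) with ha
  have ha4 : a = 1 / (4 * S₀) := by
    rw [ha, hα₀]; field_simp; ring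
  have hγ : γ₀ = 4 * S₀ + 1 := by
    rw [hγ₀, hα₀]; field_simp; ring
  have haγ : a * γ₀ = a + 1 := by
    rw [ha4, hγ]; field_simp; ring
  have hab : a * β₀ * (ρ₀ * c₀ ^ 2) = 1 := by
    rw [ha4, hβ₀]; field_simp
  have hC : c₀ ^ 2 / γ₀ * (a * γ₀) * β₀ = 1 / ρ₀ := by
    rw [ha4, hβ₀, hγ]; field_simp
  -- derivatives
  have hux : (0:ℝ) < 1 + β₀ * p x := hpos x
  have hud : HasFDerivAt (fun y => 1 + β₀ * p y) (β₀ • fderiv ℝ p x) x := by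
    simpa using ((hp x).hasFDerivAt.const_mul β₀).const_add 1
  have hQd : HasFDerivAt Q
      ((a * (1 + β₀ * p x) ^ (a - 1)) • (β₀ • fderiv ℝ p x)) x := by
    rw [hQ]
    exact hud.rpow_const (Or.inl (hpos x).ne')
  have hmd : HasFDerivAt m
      (Q x • fderiv ℝ w x + w x •
        ((a * (1 + β₀ * p x) ^ (a - 1)) • (β₀ • fderiv ℝ p x))) x := by
    rw [hm]
    exact hQd.mul (hw x).hasFDerivAt
  have hFd : HasFDerivAt (fun y => m y * w y + c₀ ^ 2 / γ₀ * Q y ^ γ₀)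
      ((m x • fderiv ℝ w x + w x •
          (Q x • fderiv ℝ w x + w x •
            ((a * (1 + β₀ * p x) ^ (a - 1)) • (β₀ • fderiv ℝ p x)))) +
        (c₀ ^ 2 / γ₀) • ((a * γ₀ * (1 + β₀ * p x) ^ (a * γ₀ - 1)) •
          (β₀ • fderiv ℝ p x))) x := by
    have hrw : (fun y => m y * w y + c₀ ^ 2 / γ₀ * Q y ^ γ₀)
        = fun y => m y * w y + c₀ ^ 2 / γ₀ * (1 + β₀ * p y) ^ (a * γ₀) := by
      funext y
      rw [hQ]
      rw [Real.rpow_mul (hpos y).le]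
    rw [hrw]
    have h1 : HasFDerivAt (fun y => m y * w y)
        (m x • fderiv ℝ w x + w x • (Q x • fderiv ℝ w x + w x •
            ((a * (1 + β₀ * p x) ^ (a - 1)) • (β₀ • fderiv ℝ p x)))) x :=
      hmd.mul (hw x).hasFDerivAt
    have h2 : HasFDerivAt (fun y => c₀ ^ 2 / γ₀ * (1 + β₀ * p y) ^ (a * γ₀))
        ((c₀ ^ 2 / γ₀) • ((a * γ₀ * (1 + β₀ * p x) ^ (a * γ₀ - 1)) •
          (β₀ • fderiv ℝ p x))) x :=
      (hud.rpow_const (Or.inl (hpos x).ne')).const_mul _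
    exact h1.add h2
  rw [hmd.fderiv, hFd.fderiv]
  -- abbreviations
  set pt := fderiv ℝ p x (1, 0)
  set pz := fderiv ℝ p x (0, 1)
  set wt := fderiv ℝ w x (1, 0)
  set wz := fderiv ℝ w x (0, 1)
  have hQx : Q x = (1 + β₀ * p x) ^ (a - 1) * (1 + β₀ * p x) := by
    rw [hQ]
    rw [← Real.rpow_add_one hux.ne' (a - 1)]
    ring_nf
  have hmx : m x = Q x * w x := by rw [hm]
  have hexp : (1 + β₀ * p x) ^ (a * γ₀ - 1) = (1 + β₀ * p x) ^ (a - 1) * (1 + β₀ * p x) := by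
    rw [haγ]
    rw [show a + 1 - 1 = a by ring, ← Real.rpow_add_one hux.ne' (a - 1)]
    ring_nf
  simp only [ContinuousLinearMap.add_apply, ContinuousLinearMap.smul_apply, smul_eq_mul]
  set A := (1 + β₀ * p x) ^ (a - 1)
  set u := 1 + β₀ * p x
  have E1 := hdyn x
  have E2 := hhooke x
  rw [hmx, hQx, hexp]
  have hρinv : ρ₀ * ρ₀⁻¹ = 1 := mul_inv_cancel₀ hρ₀.ne'
  linear_combination (w x * a * A * β₀) * E2 + (A * u / ρ₀) * E1
    - (A * u * w x * wz) * hab + (A * u * pz) * hC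
    - (A * u * (wt + w x * wz + g)) * hρinv
end

section
/- Let c₀, α₀ be positive real numbers, γ₀ = 2c₀/α₀ + 1, and P(q) = (c₀²/γ₀) q^{γ₀}. Let q₀, q₀f, q_s, q_ref be real numbers with 1 ≤ q₀ ≤ q₀f, q₀f² ≤ q_ref, and q₀ < q_s < q_ref, and set A = c₀ q_ref^{c₀/α₀} · (q_ref/q₀f). Then the Rankine–Hugoniot shock speed satisfies (A/2)·(q_s − q₀)/q_s + ((q_s + q₀)/2)·√((P(q_s) − P(q₀))/(q_s q₀ (q_s − q₀))) < A; that is, the front shock wave propagates slower than the strain wave of reference velocity A. -/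
lemma rpow_sub_rpow_le_mvt (γ : ℝ) (hγ : 1 ≤ γ) {a b : ℝ} (ha : 0 < a) (hab : a < b) :
    b ^ γ - a ^ γ ≤ γ * b ^ (γ - 1) * (b - a) := by
  obtain ⟨c, hc, hc'⟩ := exists_hasDerivAt_eq_slope (fun x : ℝ => x ^ γ)
    (fun x => γ * x ^ (γ - 1)) hab
    (fun x _ => (Real.hasDerivAt_rpow_const (Or.inr hγ)).continuousAt.continuousWithinAt)
    (fun x _ => Real.hasDerivAt_rpow_const (Or.inr hγ))
  have hcpos : 0 < c := lt_trans ha hc.1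
  have hbound : γ * c ^ (γ - 1) ≤ γ * b ^ (γ - 1) := by
    have := Real.rpow_le_rpow hcpos.le hc.2.le (by linarith : (0:ℝ) ≤ γ - 1)
    nlinarith [this]
  have hslope : (b ^ γ - a ^ γ) / (b - a) ≤ γ * b ^ (γ - 1) := by rw [← hc']; exact hbound
  have hba : 0 < b - a := by linarith
  calc b ^ γ - a ^ γ = (b ^ γ - a ^ γ) / (b - a) * (b - a) := by field_simp
    _ ≤ γ * b ^ (γ - 1) * (b - a) := mul_le_mul_of_nonneg_right hslope hba.le

/-- The front shock wave propagates slower than the strain wave: the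
Rankine–Hugoniot shock speed is smaller than the reference velocity
`A = c₀ q_ref^(c₀/α₀) · (q_ref / q₀f)`, where `P(q) = (c₀²/γ₀) q^γ₀` and
`γ₀ = 2c₀/α₀ + 1`. -/
theorem shock_slower_than_strain_wave (c₀ α₀ : ℝ) (hc₀ : 0 < c₀) (hα₀ : 0 < α₀)
    (γ₀ : ℝ) (hγ₀ : γ₀ = 2 * c₀ / α₀ + 1)
    (P : ℝ → ℝ) (hP : P = fun q : ℝ => c₀ ^ 2 / γ₀ * q ^ γ₀)
    (q₀ q₀f qs qref : ℝ)
    (h1 : 1 ≤ q₀) (h2 : q₀ ≤ q₀f) (h3 : q₀f ^ 2 ≤ qref)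
    (h4 : q₀ < qs) (h5 : qs < qref)
    (A : ℝ) (hA : A = c₀ * qref ^ (c₀ / α₀) * (qref / q₀f)) :
    A / 2 * ((qs - q₀) / qs)
      + (qs + q₀) / 2 * Real.sqrt ((P qs - P q₀) / (qs * q₀ * (qs - q₀))) < A := by
  have hβ : 0 < c₀ / α₀ := by positivity
  have hγ1 : 1 < γ₀ := by
    rw [hγ₀]
    have h : 0 < 2 * c₀ / α₀ := by positivity
    linarith
  have hγpos : 0 < γ₀ := by linarith
  have hq₀ : 0 < q₀ := by linarith
  have hqs : 0 < qs := by linarith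
  have hqref : 0 < qref := by linarith
  have hq₀f : 1 ≤ q₀f := le_trans h1 h2
  have hq₀f0 : 0 < q₀f := by linarith
  have hApos : 0 < A := by rw [hA]; positivity
  have hAq : 0 < A / qs := by positivity
  have hexp : qref ^ (c₀ / α₀) * qref ^ (c₀ / α₀) = qref ^ (γ₀ - 1) := by
    rw [← Real.rpow_add hqref]
    congr 1
    rw [hγ₀]; ring
  have hA2 : A ^ 2 = c₀ ^ 2 * qref ^ (γ₀ - 1) * (qref ^ 2 / q₀f ^ 2) := by
    rw [hA, ← hexp]; ring
  have e1 : qref ^ γ₀ = qref ^ (γ₀ - 1) * qref := by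
    rw [← Real.rpow_add_one (ne_of_gt hqref)]; congr 1; ring
  have e2 : qs ^ γ₀ = qs ^ (γ₀ - 1) * qs := by
    rw [← Real.rpow_add_one (ne_of_gt hqs)]; congr 1; ring
  have key : c₀ ^ 2 * qs ^ γ₀ < A ^ 2 := by
    have hlt : qs ^ γ₀ < qref ^ γ₀ := Real.rpow_lt_rpow hqs.le h5 hγpos
    have hle : qref ^ γ₀ ≤ qref ^ (γ₀ - 1) * (qref ^ 2 / q₀f ^ 2) := by
      rw [e1]
      have hq : qref ≤ qref ^ 2 / q₀f ^ 2 := by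
        rw [le_div_iff₀ (by positivity)]
        nlinarith [h3, hqref]
      have := mul_le_mul_of_nonneg_left hq (Real.rpow_pos_of_pos hqref (γ₀ - 1)).le
      linarith
    have h := mul_lt_mul_of_pos_left (lt_of_lt_of_le hlt hle)
      (show (0:ℝ) < c₀ ^ 2 by positivity)
    rw [hA2]
    nlinarith [h]
  have hnum : P qs - P q₀ ≤ c₀ ^ 2 * qs ^ (γ₀ - 1) * (qs - q₀) := by
    have hm := rpow_sub_rpow_le_mvt γ₀ hγ1.le hq₀ h4
    have hcc : 0 ≤ c₀ ^ 2 / γ₀ := by positivity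
    have hmm := mul_le_mul_of_nonneg_left hm hcc
    have heq : c₀ ^ 2 / γ₀ * (γ₀ * qs ^ (γ₀ - 1) * (qs - q₀))
        = c₀ ^ 2 * qs ^ (γ₀ - 1) * (qs - q₀) := by
      field_simp
    rw [hP]
    simp only
    calc c₀ ^ 2 / γ₀ * qs ^ γ₀ - c₀ ^ 2 / γ₀ * q₀ ^ γ₀
        = c₀ ^ 2 / γ₀ * (qs ^ γ₀ - q₀ ^ γ₀) := by ring
      _ ≤ c₀ ^ 2 / γ₀ * (γ₀ * qs ^ (γ₀ - 1) * (qs - q₀)) := hmm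
      _ = c₀ ^ 2 * qs ^ (γ₀ - 1) * (qs - q₀) := heq
  have hden : 0 < qs * q₀ * (qs - q₀) := by
    have : 0 < qs - q₀ := by linarith
    positivity
  have hXlt : (P qs - P q₀) / (qs * q₀ * (qs - q₀)) < (A / qs) ^ 2 := by
    calc (P qs - P q₀) / (qs * q₀ * (qs - q₀))
        ≤ c₀ ^ 2 * qs ^ (γ₀ - 1) * (qs - q₀) / (qs * q₀ * (qs - q₀)) :=
          div_le_div_of_nonneg_right hnum hden.le
      _ = c₀ ^ 2 * qs ^ (γ₀ - 1) / (qs * q₀) := by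
          rw [mul_div_mul_right _ _ (show qs - q₀ ≠ 0 by linarith)]
      _ ≤ c₀ ^ 2 * qs ^ (γ₀ - 1) / qs := by
          gcongr
          nlinarith [hqs, h1]
      _ < (A / qs) ^ 2 := by
          rw [div_pow, div_lt_div_iff₀ hqs (by positivity)]
          have h := mul_lt_mul_of_pos_right key hqs
          calc c₀ ^ 2 * qs ^ (γ₀ - 1) * qs ^ 2 = c₀ ^ 2 * qs ^ γ₀ * qs := by rw [e2]; ring
            _ < A ^ 2 * qs := h
  have hsqrt : Real.sqrt ((P qs - P q₀) / (qs * q₀ * (qs - q₀))) < A / qs :=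
    (Real.sqrt_lt' hAq).mpr hXlt
  have hfac : 0 < (qs + q₀) / 2 := by positivity
  have hsum : A / 2 * ((qs - q₀) / qs) + (qs + q₀) / 2 * (A / qs) = A := by
    field_simp; ring
  calc A / 2 * ((qs - q₀) / qs)
      + (qs + q₀) / 2 * Real.sqrt ((P qs - P q₀) / (qs * q₀ * (qs - q₀)))
      < A / 2 * ((qs - q₀) / qs) + (qs + q₀) / 2 * (A / qs) := by
        have := mul_lt_mul_of_pos_left hsqrt hfac
        linarith
    _ = A := hsum
end

section
/- Let c₀, α₀ be positive real numbers, γ₀ = 2c₀/α₀ + 1, P(q) = (c₀²/γ₀) q^{γ₀}, and let A > 0 and 0 < q₀ < q_s. Then (A/2)·(q_s − q₀)/q_s + ((q_s + q₀)/2)·√((P(q_s) − P(q₀))/(q_s q₀ (q_s − q₀))) > c₀ q₀^{c₀/α₀}; that is, the Rankine–Hugoniot shock speed exceeds the local wave speed c(q₀) of the state ahead of the shock. -/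
/-- The Rankine–Hugoniot shock speed exceeds the local wave speed
`c(q₀) = c₀ q₀^(c₀/α₀)` of the state ahead of the shock, where
`P(q) = (c₀²/γ₀) q^γ₀` and `γ₀ = 2c₀/α₀ + 1`. -/
theorem shock_faster_than_local_speed (c₀ α₀ : ℝ) (hc₀ : 0 < c₀) (hα₀ : 0 < α₀)
    (γ₀ : ℝ) (hγ₀ : γ₀ = 2 * c₀ / α₀ + 1)
    (P : ℝ → ℝ) (hP : P = fun q : ℝ => c₀ ^ 2 / γ₀ * q ^ γ₀)
    (A q₀ qs : ℝ) (hA : 0 < A) (hq₀ : 0 < q₀) (hqs : q₀ < qs) :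
    c₀ * q₀ ^ (c₀ / α₀)
      < A / 2 * ((qs - q₀) / qs)
        + (qs + q₀) / 2 * Real.sqrt ((P qs - P q₀) / (qs * q₀ * (qs - q₀))) := by
  subst hP
  have hqs0 : 0 < qs := hq₀.trans hqs
  have hd : 0 < qs - q₀ := sub_pos.2 hqs
  have hβ : 0 < c₀ / α₀ := div_pos hc₀ hα₀
  have hγ1 : 1 < γ₀ := by rw [hγ₀]; nlinarith [div_pos (by linarith : (0:ℝ) < 2 * c₀) hα₀]
  have hγpos : 0 < γ₀ := by linarith
  -- Bernoulli: (qs/q₀)^γ₀ > 1 + γ₀ (qs/q₀ - 1)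
  have hs : (0:ℝ) < qs / q₀ - 1 := by
    rw [sub_pos, lt_div_iff₀ hq₀, one_mul]; exact hqs
  have hbern := one_add_mul_self_lt_rpow_one_add (s := qs / q₀ - 1)
      (by linarith) (ne_of_gt hs) hγ1
  rw [add_sub_cancel] at hbern
  have hdivpow : (qs / q₀) ^ γ₀ = qs ^ γ₀ / q₀ ^ γ₀ :=
    Real.div_rpow hqs0.le hq₀.le γ₀
  have hq₀γ : (0:ℝ) < q₀ ^ γ₀ := Real.rpow_pos_of_pos hq₀ _
  have hkey : q₀ ^ γ₀ + γ₀ * q₀ ^ (γ₀ - 1) * (qs - q₀) < qs ^ γ₀ := by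
    have h1 : (1 + γ₀ * (qs / q₀ - 1)) * q₀ ^ γ₀ < qs ^ γ₀ / q₀ ^ γ₀ * q₀ ^ γ₀ := by
      rw [← hdivpow]
      exact mul_lt_mul_of_pos_right hbern hq₀γ
    rw [div_mul_cancel₀ _ (ne_of_gt hq₀γ)] at h1
    have h2 : q₀ ^ (γ₀ - 1) * q₀ = q₀ ^ γ₀ := by
      rw [← Real.rpow_add_one hq₀.ne' (γ₀ - 1), sub_add_cancel]
    calc q₀ ^ γ₀ + γ₀ * q₀ ^ (γ₀ - 1) * (qs - q₀)
        = (1 + γ₀ * (qs / q₀ - 1)) * q₀ ^ γ₀ := by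
          rw [← h2]; field_simp
      _ < qs ^ γ₀ := h1
  -- slope bound
  have hγm1 : γ₀ - 1 = 2 * (c₀ / α₀) := by rw [hγ₀]; ring
  have hq2 : q₀ ^ (γ₀ - 1) = (q₀ ^ (c₀ / α₀)) ^ 2 := by
    rw [hγm1, mul_comm, Real.rpow_mul hq₀.le, Real.rpow_two]
  have hPdiff : c₀ ^ 2 * (q₀ ^ (c₀ / α₀)) ^ 2 * (qs - q₀)
      < c₀ ^ 2 / γ₀ * qs ^ γ₀ - c₀ ^ 2 / γ₀ * q₀ ^ γ₀ := by
    have hc2 : (0:ℝ) < c₀ ^ 2 / γ₀ := by positivity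
    calc c₀ ^ 2 * (q₀ ^ (c₀ / α₀)) ^ 2 * (qs - q₀)
        = c₀ ^ 2 / γ₀ * (γ₀ * q₀ ^ (γ₀ - 1) * (qs - q₀)) := by
          rw [hq2]; field_simp
      _ < c₀ ^ 2 / γ₀ * (qs ^ γ₀ - q₀ ^ γ₀) := by
          apply mul_lt_mul_of_pos_left _ hc2
          linarith
      _ = c₀ ^ 2 / γ₀ * qs ^ γ₀ - c₀ ^ 2 / γ₀ * q₀ ^ γ₀ := by ring
  -- ratio bound
  set X := c₀ * q₀ ^ (c₀ / α₀) with hX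
  have hXpos : 0 < X := by positivity
  have hRpos : 0 < qs * q₀ * (qs - q₀) := by positivity
  have hratio : X ^ 2 / (qs * q₀)
      < (c₀ ^ 2 / γ₀ * qs ^ γ₀ - c₀ ^ 2 / γ₀ * q₀ ^ γ₀) / (qs * q₀ * (qs - q₀)) := by
    rw [div_lt_div_iff₀ (by positivity) hRpos]
    have : X ^ 2 = c₀ ^ 2 * (q₀ ^ (c₀ / α₀)) ^ 2 := by rw [hX]; ring
    rw [this]
    nlinarith [mul_pos hqs0 hq₀, hPdiff]
  -- sqrt
  set T := Real.sqrt (qs * q₀) with hT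
  have hTpos : 0 < T := Real.sqrt_pos.2 (by positivity)
  have hsqrt1 : Real.sqrt (X ^ 2 / (qs * q₀)) = X / T := by
    rw [Real.sqrt_div (sq_nonneg X), Real.sqrt_sq hXpos.le]
  have hsqrt2 : X / T < Real.sqrt
      ((c₀ ^ 2 / γ₀ * qs ^ γ₀ - c₀ ^ 2 / γ₀ * q₀ ^ γ₀) / (qs * q₀ * (qs - q₀))) := by
    rw [← hsqrt1]
    exact Real.sqrt_lt_sqrt (by positivity) hratio
  have hAMGM : T ≤ (qs + q₀) / 2 := by
    have h4 : qs * q₀ ≤ ((qs + q₀) / 2) ^ 2 := by nlinarith [sq_nonneg (qs - q₀)]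
    calc T ≤ Real.sqrt (((qs + q₀) / 2) ^ 2) := Real.sqrt_le_sqrt h4
      _ = (qs + q₀) / 2 := Real.sqrt_sq (by positivity)
  have hfront : 0 < A / 2 * ((qs - q₀) / qs) := by positivity
  have hXT : X = T * (X / T) := (mul_div_cancel₀ X hTpos.ne').symm
  have hstep : X < (qs + q₀) / 2 * Real.sqrt
      ((c₀ ^ 2 / γ₀ * qs ^ γ₀ - c₀ ^ 2 / γ₀ * q₀ ^ γ₀) / (qs * q₀ * (qs - q₀))) := by
    calc X = T * (X / T) := hXT
      _ ≤ (qs + q₀) / 2 * (X / T) :=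
        mul_le_mul_of_nonneg_right hAMGM (by positivity)
      _ < _ := by
        apply mul_lt_mul_of_pos_left hsqrt2 (by positivity)
  simp only
  linarith [hstep, hfront]
end

section
/- Let c₀, α₀ be positive real numbers, γ₀ = 2c₀/α₀ + 1, P(q) = (c₀²/γ₀) q^{γ₀}, and let A ≥ 0 and q₀ > 0. Then the Rankine–Hugoniot speed function F(q_s) = (A/2)·(q_s − q₀)/q_s + ((q_s + q₀)/2)·√((P(q_s) − P(q₀))/(q_s q₀ (q_s − q₀))) is strictly increasing on the interval (q₀, ∞). -/
/-- The Rankine–Hugoniot shock speed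
`F(qs) = (A/2)(qs − q₀)/qs + ((qs + q₀)/2) √((P(qs) − P(q₀))/(qs q₀ (qs − q₀)))`
is strictly increasing in `qs` on `(q₀, ∞)`, where `P(q) = (c₀²/γ₀) q^γ₀` and
`γ₀ = 2c₀/α₀ + 1`. -/
theorem shock_speed_strictMono (c₀ α₀ : ℝ) (hc₀ : 0 < c₀) (hα₀ : 0 < α₀)
    (γ₀ : ℝ) (hγ₀ : γ₀ = 2 * c₀ / α₀ + 1)
    (P : ℝ → ℝ) (hP : P = fun q : ℝ => c₀ ^ 2 / γ₀ * q ^ γ₀)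
    (A q₀ : ℝ) (hA : 0 ≤ A) (hq₀ : 0 < q₀)
    (F : ℝ → ℝ)
    (hF : F = fun qs =>
      A / 2 * ((qs - q₀) / qs)
        + (qs + q₀) / 2 * Real.sqrt ((P qs - P q₀) / (qs * q₀ * (qs - q₀)))) :
    StrictMonoOn F (Set.Ioi q₀) := by
  have hγ1 : 1 < γ₀ := by
    rw [hγ₀]
    have : 0 < 2 * c₀ / α₀ := by positivity
    linarith
  have hγpos : 0 < γ₀ := by linarith
  have hcγ : 0 < c₀ ^ 2 / γ₀ := by positivity
  -- the strictly convex function `q ↦ q^γ₀`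
  have hconv : StrictConvexOn ℝ (Set.Ici (0 : ℝ)) fun x : ℝ => x ^ γ₀ :=
    strictConvexOn_rpow hγ1
  -- slope function
  set S : ℝ → ℝ := fun q => (P q - P q₀) / (q - q₀) with hS
  set H : ℝ → ℝ := fun q => (q + q₀) ^ 2 / (4 * q * q₀) with hH
  -- positivity of slope on Ioi q₀
  have hSpos : ∀ q, q₀ < q → 0 < S q := by
    intro q hq
    have hqpos : 0 < q := lt_trans hq₀ hq
    have hrp : q₀ ^ γ₀ < q ^ γ₀ :=
      Real.rpow_lt_rpow hq₀.le hq hγpos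
    have hnum : 0 < P q - P q₀ := by
      rw [hP]
      simp only
      have := mul_lt_mul_of_pos_left hrp hcγ
      linarith
    exact div_pos hnum (by linarith)
  have hHpos : ∀ q, q₀ < q → 0 < H q := by
    intro q hq
    have hqpos : 0 < q := lt_trans hq₀ hq
    have : 0 < (q + q₀) ^ 2 := by positivity
    exact div_pos this (by positivity)
  -- slope is strictly increasing
  have hSmono : ∀ x y, q₀ < x → q₀ < y → x < y → S x < S y := by
    intro x y hx hy hxy
    have hx0 : (0 : ℝ) ≤ x := (lt_trans hq₀ hx).le
    have hy0 : (0 : ℝ) ≤ y := (lt_trans hq₀ hy).le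
    have hsec := hconv.secant_strict_mono (a := q₀) (x := x) (y := y)
      hq₀.le hx0 hy0 (ne_of_gt hx) (ne_of_gt hy) hxy
    have hxd : 0 < x - q₀ := by linarith
    have hyd : 0 < y - q₀ := by linarith
    have hSx : S x = c₀ ^ 2 / γ₀ * ((x ^ γ₀ - q₀ ^ γ₀) / (x - q₀)) := by
      rw [hS, hP]; simp only; ring
    have hSy : S y = c₀ ^ 2 / γ₀ * ((y ^ γ₀ - q₀ ^ γ₀) / (y - q₀)) := by
      rw [hS, hP]; simp only; ring
    rw [hSx, hSy]
    exact mul_lt_mul_of_pos_left hsec hcγ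
  -- H is strictly increasing
  have hHmono : ∀ x y, q₀ < x → q₀ < y → x < y → H x < H y := by
    intro x y hx hy hxy
    have hxpos : 0 < x := lt_trans hq₀ hx
    have hypos : 0 < y := lt_trans hq₀ hy
    rw [hH]
    simp only
    rw [div_lt_div_iff₀ (by positivity) (by positivity)]
    nlinarith [mul_pos (sub_pos.2 hxy) (sub_pos.2 (show q₀ * q₀ < x * y from
      mul_lt_mul'' hx hy hq₀.le hq₀.le)), hq₀, hxpos, hypos]
  -- rewrite the sqrt part as √(S q * H q)
  have hrew : ∀ q, q₀ < q →
      (q + q₀) / 2 * Real.sqrt ((P q - P q₀) / (q * q₀ * (q - q₀)))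
        = Real.sqrt (S q * H q) := by
    intro q hq
    have hqpos : 0 < q := lt_trans hq₀ hq
    have hqd : 0 < q - q₀ := by linarith
    have h1 : (0 : ℝ) ≤ (q + q₀) / 2 := by linarith
    have key : S q * H q
        = ((q + q₀) / 2) ^ 2 * ((P q - P q₀) / (q * q₀ * (q - q₀))) := by
      rw [hS, hH]
      simp only
      field_simp
      ring
    rw [key, Real.sqrt_mul (by positivity), Real.sqrt_sq h1]
  -- main argument
  intro x hx y hy hxy
  simp only [Set.mem_Ioi] at hx hy
  have hxpos : 0 < x := lt_trans hq₀ hx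
  have hypos : 0 < y := lt_trans hq₀ hy
  rw [hF]
  simp only
  have h1 : A / 2 * ((x - q₀) / x) ≤ A / 2 * ((y - q₀) / y) := by
    have : (x - q₀) / x ≤ (y - q₀) / y := by
      rw [div_le_div_iff₀ hxpos hypos]
      nlinarith
    exact mul_le_mul_of_nonneg_left this (by linarith)
  have h2 : (x + q₀) / 2 * Real.sqrt ((P x - P q₀) / (x * q₀ * (x - q₀)))
      < (y + q₀) / 2 * Real.sqrt ((P y - P q₀) / (y * q₀ * (y - q₀))) := by
    rw [hrew x hx, hrew y hy]
    apply Real.sqrt_lt_sqrt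
    · exact mul_nonneg (hSpos x hx).le (hHpos x hx).le
    · exact mul_lt_mul'' (hSmono x y hx hy hxy) (hHmono x y hx hy hxy)
        (hSpos x hx).le (hHpos x hx).le
  linarith
end

section
/- Let D ⊆ ℝ × ℝ be an open set, u, c, S : ℝ × ℝ → ℝ arbitrary functions, f : ℝ → ℝ differentiable, and q : ℝ × ℝ → ℝ a function of (x, t) admitting partial derivatives on D; set m(x,t) = f(q(x,t)). Assume that for all (x,t) ∈ D: ∂_t q + ∂_x m = 0 and ∂_t m + 2u(q,m)·∂_x m + (c(q,m)² − u(q,m)²)·∂_x q = S(q,m). Then for all (x,t) ∈ D: (c(q,m)² − (u(q,m) − f′(q))²)·∂_x q = S(q,m), where all functions are evaluated at (q(x,t), m(x,t)) and f′ at q(x,t). -/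
/-- For a 2×2 hyperbolic system `q_t + m_x = 0`,
`m_t + 2u m_x + (c² − u²) q_x = S(q, m)` with a linkage `m = f(q)`, the second
equation reduces to `(c² − (u − f′(q))²) q_x = S(q, m)`.
Variables are ordered `(x, t)`. -/
theorem linkage_reduction (D : Set (ℝ × ℝ)) (hD : IsOpen D)
    (u c S : ℝ × ℝ → ℝ)
    (f : ℝ → ℝ) (hf : Differentiable ℝ f)
    (q : ℝ × ℝ → ℝ) (qx qt : ℝ × ℝ → ℝ)
    (hqx : ∀ p ∈ D, HasDerivAt (fun x => q (x, p.2)) (qx p) p.1)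
    (hqt : ∀ p ∈ D, HasDerivAt (fun t => q (p.1, t)) (qt p) p.2)
    (m : ℝ × ℝ → ℝ) (hm : m = fun p => f (q p))
    (mx mt : ℝ × ℝ → ℝ)
    (hmx : ∀ p ∈ D, HasDerivAt (fun x => m (x, p.2)) (mx p) p.1)
    (hmt : ∀ p ∈ D, HasDerivAt (fun t => m (p.1, t)) (mt p) p.2)
    (h1 : ∀ p ∈ D, qt p + mx p = 0)
    (h2 : ∀ p ∈ D,
      mt p + 2 * u (q p, m p) * mx p
        + (c (q p, m p) ^ 2 - u (q p, m p) ^ 2) * qx p = S (q p, m p)) :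
    ∀ p ∈ D,
      (c (q p, m p) ^ 2 - (u (q p, m p) - deriv f (q p)) ^ 2) * qx p
        = S (q p, m p) := by
  intro p hp
  have hfd : HasDerivAt f (deriv f (q p)) (q p) := (hf (q p)).hasDerivAt
  have hmx' : HasDerivAt (fun x => m (x, p.2)) (deriv f (q p) * qx p) p.1 := by
    subst hm
    exact hfd.comp p.1 (hqx p hp)
  have hmt' : HasDerivAt (fun t => m (p.1, t)) (deriv f (q p) * qt p) p.2 := by
    subst hm
    exact hfd.comp p.2 (hqt p hp)
  have ex : mx p = deriv f (q p) * qx p := (hmx p hp).unique hmx'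
  have et : mt p = deriv f (q p) * qt p := (hmt p hp).unique hmt'
  have e1 : qt p = - (deriv f (q p) * qx p) := by
    have := h1 p hp; rw [ex] at this; linarith
  have h2' := h2 p hp
  rw [et, ex, e1] at h2'
  nlinarith [h2']
end

section
/- Let I, J ⊆ ℝ be open intervals, u, c, S : ℝ × ℝ → ℝ continuous functions, f : ℝ → ℝ twice continuously differentiable, and q : ℝ × ℝ → ℝ a continuously differentiable function of (x, t) on I × J; set m(x,t) = f(q(x,t)). Assume that for all (x,t) ∈ I × J: (i) ∂_t q + ∂_x m = 0; (ii) ∂_t m + 2u(q,m)·∂_x m + (c(q,m)² − u(q,m)²)·∂_x q = S(q,m); and (iii) S(q(x,t), m(x,t)) ≠ 0. Then there exist real constants A and B such that for all (x,t) ∈ I × J: m(x,t) = A·q(x,t) − B, ∂_t q + A·∂_x q = 0, and ∂_t m + A·∂_x m = 0. In particular, the solution of the nonlinear non-homogeneous system is also a non-constant solution of a linear homogeneous transport system with constant speed A. -/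
open Set Filter Topology

/-- A function with zero derivative at every point of a convex open set is constant there. -/
lemma swl_const_of_deriv_zero {s : Set ℝ} (hs : Convex ℝ s) (ho : IsOpen s) {g : ℝ → ℝ}
    (hg : ∀ x ∈ s, HasDerivAt g 0 x) {x y : ℝ} (hx : x ∈ s) (hy : y ∈ s) : g x = g y := by
  apply hs.is_const_of_fderivWithin_eq_zero
    (fun z hz => ((hg z hz).differentiableAt).differentiableWithinAt) ?_ hx hy
  intro z hz
  rw [fderivWithin_of_isOpen ho hz, (hg z hz).hasFDerivAt.fderiv]
  ext
  simp

/-- Source wave linearity: a solution with linkage `m = f(q)` of the nonlinear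
non-homogeneous 2×2 system `q_t + m_x = 0`,
`m_t + 2u m_x + (c² − u²) q_x = S(q, m)` with nowhere-vanishing source is also
a solution of the linear homogeneous transport system `q_t + A q_x = 0`,
`m_t + A m_x = 0` for a real constant `A`, with affine linkage `m = A q − B`.
Variables are ordered `(x, t)`. -/
theorem source_wave_linearity (a b a' b' : ℝ) (I J : Set ℝ)
    (hI : I = Set.Ioo a b) (hJ : J = Set.Ioo a' b')
    (u c S : ℝ × ℝ → ℝ)
    (hu : Continuous u) (hc : Continuous c) (hS : Continuous S)
    (f : ℝ → ℝ) (hf : ContDiff ℝ 2 f)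
    (q : ℝ × ℝ → ℝ) (hq : ContDiffOn ℝ 1 q (I ×ˢ J))
    (m : ℝ × ℝ → ℝ) (hm : m = fun p => f (q p))
    (h1 : ∀ p ∈ I ×ˢ J, fderiv ℝ q p (0, 1) + fderiv ℝ m p (1, 0) = 0)
    (h2 : ∀ p ∈ I ×ˢ J,
      fderiv ℝ m p (0, 1) + 2 * u (q p, m p) * fderiv ℝ m p (1, 0)
        + (c (q p, m p) ^ 2 - u (q p, m p) ^ 2) * fderiv ℝ q p (1, 0)
        = S (q p, m p))
    (h3 : ∀ p ∈ I ×ˢ J, S (q p, m p) ≠ 0) :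
    ∃ A B : ℝ, ∀ p ∈ I ×ˢ J,
      m p = A * q p - B ∧
      fderiv ℝ q p (0, 1) + A * fderiv ℝ q p (1, 0) = 0 ∧
      fderiv ℝ m p (0, 1) + A * fderiv ℝ m p (1, 0) = 0 := by
  subst hm
  simp only at h1 h2 h3
  set Ω : Set (ℝ × ℝ) := I ×ˢ J with hΩdef
  have hIo : IsOpen I := hI ▸ isOpen_Ioo
  have hJo : IsOpen J := hJ ▸ isOpen_Ioo
  have hΩo : IsOpen Ω := hIo.prod hJo
  have hΩc : Convex ℝ Ω := ((hI ▸ convex_Ioo a b : Convex ℝ I)).prod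
    ((hJ ▸ convex_Ioo a' b' : Convex ℝ J))
  rcases Set.eq_empty_or_nonempty Ω with hE | ⟨p₀, hp₀⟩
  · exact ⟨0, 0, fun p hp => absurd (hΩdef ▸ hp : p ∈ Ω) (hE ▸ Set.notMem_empty p)⟩
  -- basic smoothness facts
  have hf1 : ContDiff ℝ 1 f := hf.of_le (by norm_num)
  have hF1 : ContDiff ℝ 1 (deriv f) := by
    have h2' : ContDiff ℝ ((1 : ℕ) + 1) f := by exact_mod_cast hf
    exact (contDiff_succ_iff_deriv.mp h2').2.2
  set F : ℝ → ℝ := deriv f with hFdef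
  have hqd : ∀ p ∈ Ω, DifferentiableAt ℝ q p := fun p hp =>
    (hq.contDiffAt (hΩo.mem_nhds hp)).differentiableAt one_ne_zero
  -- chain rule for m = f ∘ q
  have hmv : ∀ p ∈ Ω, ∀ v : ℝ × ℝ,
      fderiv ℝ (fun p => f (q p)) p v = F (q p) * fderiv ℝ q p v := by
    intro p hp v
    have hcomp : HasFDerivAt (fun p => f (q p)) (F (q p) • fderiv ℝ q p) p :=
      HasDerivAt.comp_hasFDerivAt p
        ((hf1.differentiable one_ne_zero (q p)).hasDerivAt) (hqd p hp).hasFDerivAt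
    rw [hcomp.fderiv]
    simp [mul_comm]
  -- equation (i) in terms of q
  have e1 : ∀ p ∈ Ω, fderiv ℝ q p (0, 1) = -(F (q p) * fderiv ℝ q p (1, 0)) := by
    intro p hp
    have := h1 p hp
    rw [hmv p hp (1, 0)] at this
    linarith
  -- equation (ii) in terms of q
  set G : ℝ → ℝ := fun y =>
    2 * u (y, f y) * F y - F y ^ 2 + (c (y, f y) ^ 2 - u (y, f y) ^ 2) with hGdef
  have e2 : ∀ p ∈ Ω, G (q p) * fderiv ℝ q p (1, 0) = S (q p, f (q p)) := by
    intro p hp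
    have h2' := h2 p hp
    rw [hmv p hp (0, 1), hmv p hp (1, 0), e1 p hp] at h2'
    simp only [hGdef]
    linear_combination h2'
  have hGne : ∀ p ∈ Ω, G (q p) ≠ 0 := by
    intro p hp hG0
    exact h3 p hp (by rw [← e2 p hp, hG0, zero_mul])
  have hDne : ∀ p ∈ Ω, fderiv ℝ q p (1, 0) ≠ 0 := by
    intro p hp hD0
    exact h3 p hp (by rw [← e2 p hp, hD0, mul_zero])
  set H : ℝ → ℝ := fun y => S (y, f y) / G y with hHdef
  have hDH : ∀ p ∈ Ω, fderiv ℝ q p (1, 0) = H (q p) := by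
    intro p hp
    simp only [hHdef]
    rw [← e2 p hp, mul_div_cancel_left₀ _ (hGne p hp)]
  set K : Set ℝ := q '' Ω with hKdef
  have hy₀K : q p₀ ∈ K := ⟨p₀, hp₀, rfl⟩
  have hGKne : ∀ y ∈ K, G y ≠ 0 := by rintro y ⟨p, hp, rfl⟩; exact hGne p hp
  have hHne : ∀ y ∈ K, H y ≠ 0 := by
    rintro y ⟨p, hp, rfl⟩; rw [← hDH p hp]; exact hDne p hp
  have hFc : Continuous F := hF1.continuous
  have hfc : Continuous f := hf1.continuous
  have hGcont : Continuous G := by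
    rw [hGdef]
    fun_prop
  have hScont : Continuous fun y => S (y, f y) := by fun_prop
  have hHcont : ContinuousOn H K := by
    intro y hy
    exact (hScont.continuousAt.div hGcont.continuousAt (hGKne y hy)).continuousWithinAt
  -- K is a convex open set
  have hKpc : IsPreconnected K := (hΩc.isPreconnected).image q hq.continuousOn
  have hKconv : Convex ℝ K := hKpc.ordConnected.convex
  -- slice derivatives
  have hsx : ∀ p ∈ Ω, HasDerivAt (fun x => q (x, p.2)) (fderiv ℝ q p (1, 0)) p.1 := by
    intro p hp
    have h0 : HasDerivAt (fun x : ℝ => ((x : ℝ), p.2)) ((1 : ℝ), (0 : ℝ)) p.1 :=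
      (hasDerivAt_id p.1).prodMk (hasDerivAt_const p.1 p.2)
    exact (hqd p hp).hasFDerivAt.comp_hasDerivAt_of_eq p.1 h0 rfl
  have hst : ∀ p ∈ Ω, HasDerivAt (fun t => q (p.1, t)) (fderiv ℝ q p (0, 1)) p.2 := by
    intro p hp
    have h0 : HasDerivAt (fun t : ℝ => (p.1, (t : ℝ))) ((0 : ℝ), (1 : ℝ)) p.2 :=
      (hasDerivAt_const p.2 p.1).prodMk (hasDerivAt_id p.2)
    exact (hqd p hp).hasFDerivAt.comp_hasDerivAt_of_eq p.2 h0 rfl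
  have hKo : IsOpen K := by
    rw [isOpen_iff_mem_nhds]
    rintro y ⟨p, hp, rfl⟩
    have hφ : ContDiffAt ℝ 1 (fun x => q (x, p.2)) p.1 :=
      (hq.contDiffAt (hΩo.mem_nhds hp)).comp p.1
        ((contDiff_id.prodMk contDiff_const).contDiffAt)
    have hsd : HasStrictDerivAt (fun x => q (x, p.2)) (fderiv ℝ q p (1, 0)) p.1 :=
      hφ.hasStrictDerivAt' (hsx p hp) one_ne_zero
    have hmap := hsd.map_nhds_eq (hDne p hp)
    have hmem : K ∈ Filter.map (fun x => q (x, p.2)) (𝓝 p.1) :=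
      Filter.mem_map.2 (Filter.mem_of_superset (hIo.mem_nhds hp.1)
        (fun x hx => ⟨(x, p.2), ⟨hx, hp.2⟩, rfl⟩))
    rw [hmap] at hmem
    exact hmem
  -- the antiderivative X of 1/H on K
  set X : ℝ → ℝ := fun y => ∫ s in (q p₀)..y, (H s)⁻¹ with hXdef
  have hContInv : ContinuousOn (fun s => (H s)⁻¹) K := hHcont.inv₀ hHne
  have hXder : ∀ y ∈ K, HasDerivAt X (H y)⁻¹ y := by
    intro y hy
    have huIcc : uIcc (q p₀) y ⊆ K := (hKconv.ordConnected).uIcc_subset hy₀K hy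
    have hint : IntervalIntegrable (fun s => (H s)⁻¹) MeasureTheory.volume (q p₀) y :=
      (hContInv.mono huIcc).intervalIntegrable
    have hmeas : StronglyMeasurableAtFilter (fun s => (H s)⁻¹) (𝓝 y) :=
      hContInv.stronglyMeasurableAtFilter hKo y hy
    exact intervalIntegral.integral_hasDerivAt_right hint hmeas
      ((hContInv y hy).continuousAt (hKo.mem_nhds hy))
  -- derivative of X ∘ q in x is 1
  have hXx : ∀ p ∈ Ω, HasDerivAt (fun x => X (q (x, p.2))) 1 p.1 := by
    intro p hp
    have := (hXder (q p) ⟨p, hp, rfl⟩).comp p.1 (hsx p hp)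
    rwa [hDH p hp, inv_mul_cancel₀ (hHne (q p) ⟨p, hp, rfl⟩)] at this
  -- derivative of X ∘ q in t is -F(q)
  have hXt : ∀ p ∈ Ω, HasDerivAt (fun t => X (q (p.1, t))) (-(F (q p))) p.2 := by
    intro p hp
    have := (hXder (q p) ⟨p, hp, rfl⟩).comp p.2 (hst p hp)
    rw [e1 p hp, hDH p hp] at this
    rw [show -(F (q p)) = (H (q p))⁻¹ * -(F (q p) * H (q p)) by
      field_simp [hHne (q p) ⟨p, hp, rfl⟩]]
    exact this
  have hIconv : Convex ℝ I := hI ▸ convex_Ioo a b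
  have hJconv : Convex ℝ J := hJ ▸ convex_Ioo a' b'
  -- constancy in x of X(q(x,t)) - x
  have hconst : ∀ t ∈ J, ∀ x ∈ I, ∀ x' ∈ I,
      X (q (x, t)) - x = X (q (x', t)) - x' := by
    intro t ht x hx x' hx'
    exact swl_const_of_deriv_zero hIconv hIo
      (g := fun x => X (q (x, t)) - x)
      (fun z hz => by
        have h := ((hXx (z, t) ⟨hz, ht⟩).sub (hasDerivAt_id z)); rw [sub_self] at h; exact h) hx hx'
  -- Claim A : F (q (x,t)) does not depend on x
  have hA1 : ∀ t ∈ J, ∀ x ∈ I, ∀ x' ∈ I, F (q (x, t)) = F (q (x', t)) := by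
    intro t ht x hx x' hx'
    have hd1 : HasDerivAt (fun τ => X (q (x, τ))) (-(F (q (x, t)))) t := hXt (x, t) ⟨hx, ht⟩
    have hd2 : HasDerivAt (fun τ => X (q (x', τ)) + (x - x')) (-(F (q (x', t)))) t :=
      (hXt (x', t) ⟨hx', ht⟩).add_const _
    have heq : (fun τ => X (q (x, τ))) =ᶠ[𝓝 t] (fun τ => X (q (x', τ)) + (x - x')) := by
      filter_upwards [hJo.mem_nhds ht] with τ hτ
      have := hconst τ hτ x hx x' hx'
      linarith
    have := hd1.unique (hd2.congr_of_eventuallyEq heq)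
    linarith
  -- X is injective on K
  have hXcont : ContinuousOn X K := fun y hy => ((hXder y hy).continuousAt).continuousWithinAt
  have hXderiv : ∀ y ∈ interior K, deriv X y = (H y)⁻¹ := by
    intro y hy
    rw [hKo.interior_eq] at hy
    exact (hXder y hy).deriv
  have hXinj : InjOn X K := by
    rcases lt_or_gt_of_ne (hHne (q p₀) hy₀K) with hneg | hpos
    · have hsign : ∀ y ∈ K, H y < 0 := by
        intro y hy
        rcases lt_or_gt_of_ne (hHne y hy) with h | h
        · exact h
        · exfalso
          have huIcc : uIcc (q p₀) y ⊆ K := (hKconv.ordConnected).uIcc_subset hy₀K hy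
          have : (0 : ℝ) ∈ uIcc (H (q p₀)) (H y) :=
            Set.mem_uIcc.2 (Or.inl ⟨hneg.le, h.le⟩)
          obtain ⟨z, hz, hz0⟩ := intermediate_value_uIcc (hHcont.mono huIcc) this
          exact hHne z (huIcc hz) hz0
      exact (strictAntiOn_of_deriv_neg hKconv hXcont (fun y hy => by
        rw [hXderiv y hy]
        rw [hKo.interior_eq] at hy
        exact inv_neg''.2 (hsign y hy))).injOn
    · have hsign : ∀ y ∈ K, 0 < H y := by
        intro y hy
        rcases lt_or_gt_of_ne (hHne y hy) with h | h
        · exfalso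
          have huIcc : uIcc (q p₀) y ⊆ K := (hKconv.ordConnected).uIcc_subset hy₀K hy
          have : (0 : ℝ) ∈ uIcc (H (q p₀)) (H y) :=
            Set.mem_uIcc.2 (Or.inr ⟨h.le, hpos.le⟩)
          obtain ⟨z, hz, hz0⟩ := intermediate_value_uIcc (hHcont.mono huIcc) this
          exact hHne z (huIcc hz) hz0
        · exact h
      exact (strictMonoOn_of_deriv_pos hKconv hXcont (fun y hy => by
        rw [hXderiv y hy]
        rw [hKo.interior_eq] at hy
        exact inv_pos.2 (hsign y hy))).injOn
  -- Claim B : F (q (x₀, t)) does not depend on t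
  obtain ⟨x₀, t₀⟩ := p₀
  have hx₀ : x₀ ∈ I := hp₀.1
  have ht₀ : t₀ ∈ J := hp₀.2
  set w : ℝ → ℝ := fun t => F (q (x₀, t)) with hwdef
  have hwloc : ∀ t ∈ J, ∀ᶠ τ in 𝓝 t, w τ = w t := by
    intro t ht
    set ψ : ℝ → ℝ := fun τ => X (q (x₀, τ)) with hψdef
    have hψc : ContinuousAt ψ t := (hXt (x₀, t) ⟨hx₀, ht⟩).continuousAt
    have hxev : ∀ᶠ τ in 𝓝 t, x₀ + ψ t - ψ τ ∈ I := by
      have hcont : ContinuousAt (fun τ => x₀ + ψ t - ψ τ) t :=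
        (continuousAt_const.sub hψc)
      have : x₀ + ψ t - ψ t ∈ I := by simpa using hx₀
      exact hcont.eventually_mem (hIo.mem_nhds this)
    filter_upwards [hxev, hJo.mem_nhds ht] with τ hxτ hτ
    have key : X (q (x₀ + ψ t - ψ τ, τ)) = X (q (x₀, t)) := by
      have hc := hconst τ hτ (x₀ + ψ t - ψ τ) hxτ x₀ hx₀
      simp only [hψdef] at hc ⊢
      linarith
    have hqeq : q (x₀ + ψ t - ψ τ, τ) = q (x₀, t) :=
      hXinj ⟨(x₀ + ψ t - ψ τ, τ), ⟨hxτ, hτ⟩, rfl⟩ ⟨(x₀, t), ⟨hx₀, ht⟩, rfl⟩ key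
    calc w τ = F (q (x₀ + ψ t - ψ τ, τ)) := hA1 τ hτ x₀ hx₀ _ hxτ
      _ = F (q (x₀, t)) := by rw [hqeq]
  have hwconst : ∀ t ∈ J, w t = w t₀ := by
    intro t ht
    refine swl_const_of_deriv_zero hJconv hJo (g := w) ?_ ht ht₀
    intro τ hτ
    exact (hasDerivAt_const τ (w τ)).congr_of_eventuallyEq
      ((hwloc τ hτ).mono fun σ hσ => hσ)
  -- F ∘ q is the constant A on Ω
  set A : ℝ := F (q (x₀, t₀)) with hAdef
  have hAconst : ∀ p ∈ Ω, F (q p) = A := by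
    rintro ⟨x, t⟩ ⟨hx, ht⟩
    calc F (q (x, t)) = F (q (x₀, t)) := hA1 t ht x hx x₀ hx₀
      _ = A := hwconst t ht
  have hFK : ∀ y ∈ K, F y = A := by rintro y ⟨p, hp, rfl⟩; exact hAconst p hp
  set B : ℝ := A * q (x₀, t₀) - f (q (x₀, t₀)) with hBdef
  have haffine : ∀ p ∈ Ω, f (q p) = A * q p - B := by
    intro p hp
    have hder : ∀ y ∈ K, HasDerivAt (fun y => f y - A * y) 0 y := by
      intro y hy
      have := ((hf1.differentiable one_ne_zero y).hasDerivAt).sub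
        ((hasDerivAt_id y).const_mul A)
      rw [show F y - A * 1 = 0 by rw [hFK y hy]; ring] at this
      exact this
    have := swl_const_of_deriv_zero hKconv hKo hder ⟨p, hp, rfl⟩ hy₀K
    simp only [hBdef]
    linarith
  refine ⟨A, B, ?_⟩
  intro p hp
  have hpΩ : p ∈ Ω := hp
  refine ⟨haffine p hpΩ, ?_, ?_⟩
  · rw [e1 p hpΩ, hAconst p hpΩ]; ring
  · rw [hmv p hpΩ (0, 1), hmv p hpΩ (1, 0), e1 p hpΩ, hAconst p hpΩ]; ring
end
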